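/- Let q ≥ 2 and p₁, p₂ ≥ 1 be integers, let u₁, u₂, λ be nonzero complex numbers and b₁, b₂ ∈ ℂ. Then there is no formal power series g ∈ ℂ[[z₁, z₂]] with g(0) = 0 satisfying (1 − b₁z₁^{p₁} − b₂z₂^{p₂}) · g^q = λ(u₁ z₁^{p₁} + u₂ z₂^{p₂}). -/

import Mathlib

open MvPowerSeries

private lemma hom_mul {σ : Type*} (w : σ → ℕ) {a b : ℕ} {f g : MvPowerSeries σ ℂ}
    (hf : ∀ d, coeff d f ≠ 0 → Finsupp.weight w d = a)
    (hg : ∀ d, coeff d g ≠ 0 → Finsupp.weight w d = b) :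
    ∀ d, coeff d (f * g) ≠ 0 → Finsupp.weight w d = a + b := by
  classical
  intro d hd
  rw [coeff_mul] at hd
  obtain ⟨p, hp, hne⟩ := Finset.exists_ne_zero_of_sum_ne_zero hd
  rw [Finset.HasAntidiagonal.mem_antidiagonal] at hp
  have h1 := hf p.1 (left_ne_zero_of_mul hne)
  have h2 := hg p.2 (right_ne_zero_of_mul hne)
  rw [← hp, map_add, h1, h2]

private lemma hom_pow {σ : Type*} (w : σ → ℕ) {a : ℕ} {f : MvPowerSeries σ ℂ}
    (hf : ∀ d, coeff d f ≠ 0 → Finsupp.weight w d = a) (k : ℕ) :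
    ∀ d, coeff d (f ^ k) ≠ 0 → Finsupp.weight w d = k * a := by
  classical
  induction k with
  | zero =>
    intro d hd
    rw [pow_zero, coeff_one] at hd
    have hd0 : d = 0 := by by_contra h; simp [h] at hd
    simp [hd0]
  | succ k ih =>
    intro d hd
    rw [pow_succ] at hd
    have := hom_mul w ih hf d hd
    rw [this]; ring

private lemma pow_order' {σ : Type*} (w : σ → ℕ) {a : ℕ} {f : MvPowerSeries σ ℂ}
    (hf : (a : ℕ∞) ≤ f.weightedOrder w) (k : ℕ) :
    ((k * a : ℕ) : ℕ∞) ≤ (f ^ k).weightedOrder w := by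
  induction k with
  | zero => simp [pow_zero]
  | succ k ih =>
    rw [pow_succ]
    refine le_trans ?_ (le_weightedOrder_mul w)
    have : ((k+1) * a : ℕ) = (k * a) + a := by ring
    rw [this, Nat.cast_add]
    exact add_le_add ih hf

private lemma pow_diff_order {σ : Type*} (w : σ → ℕ) {a : ℕ} {f r : MvPowerSeries σ ℂ}
    (hf : (a : ℕ∞) ≤ f.weightedOrder w) (hr : ((a + 1 : ℕ) : ℕ∞) ≤ r.weightedOrder w) (k : ℕ) :
    ((k * a + 1 : ℕ) : ℕ∞) ≤ ((f + r) ^ k - f ^ k).weightedOrder w := by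
  have hfr : (a : ℕ∞) ≤ (f + r).weightedOrder w := by
    refine le_trans (le_min hf (le_trans ?_ hr)) (min_weightedOrder_le_add w)
    exact_mod_cast Nat.le_succ a
  induction k with
  | zero => simp
  | succ k ih =>
    have key : (f + r) ^ (k+1) - f ^ (k+1) = ((f + r) ^ k - f ^ k) * (f + r) + f ^ k * r := by
      ring
    rw [key]
    refine le_trans (le_min ?_ ?_) (min_weightedOrder_le_add w)
    · refine le_trans ?_ (le_weightedOrder_mul w)
      have h2 : ((k+1) * a + 1 : ℕ) = (k * a + 1) + a := by ring
      rw [h2, Nat.cast_add]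
      exact add_le_add ih hfr
    · refine le_trans ?_ (le_weightedOrder_mul w)
      have h2 : ((k+1) * a + 1 : ℕ) = (k * a) + (a + 1) := by ring
      rw [h2, Nat.cast_add]
      exact add_le_add (pow_order' w hf k) hr

set_option maxHeartbeats 2000000 in
open MvPowerSeries in
theorem stmt_2 (q p₁ p₂ : ℕ) (hq : 2 ≤ q) (hp₁ : 1 ≤ p₁) (hp₂ : 1 ≤ p₂)
    (u₁ u₂ lam : ℂ) (hu₁ : u₁ ≠ 0) (hu₂ : u₂ ≠ 0) (hlam : lam ≠ 0) (b₁ b₂ : ℂ) :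
    ¬ ∃ g : MvPowerSeries (Fin 2) ℂ, constantCoeff (σ := Fin 2) (R := ℂ) g = 0 ∧
      (1 - C (σ := Fin 2) (R := ℂ) b₁ * (X 0) ^ p₁ - C (σ := Fin 2) (R := ℂ) b₂ * (X 1) ^ p₂) * g ^ q
        = C (σ := Fin 2) (R := ℂ) lam * (C (σ := Fin 2) (R := ℂ) u₁ * (X 0) ^ p₁ + C (σ := Fin 2) (R := ℂ) u₂ * (X 1) ^ p₂) := by
  classical
  rintro ⟨g, hg0, heq⟩
  set w : Fin 2 → ℕ := fun i => if i = 0 then p₂ else p₁ with hw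
  set p : ℕ := p₁ * p₂ with hp
  have hpp : 1 ≤ p := by
    rw [hp]; exact Nat.one_le_iff_ne_zero.mpr (Nat.mul_ne_zero (by omega) (by omega))
  -- basic weight computations
  have wsingle : ∀ (i : Fin 2) (n : ℕ), Finsupp.weight w (Finsupp.single i n) = n * w i := by
    intro i n
    simp [Finsupp.weight_apply, Finsupp.sum_single_index]
  have hdecomp : ∀ e : Fin 2 →₀ ℕ, e = Finsupp.single 0 (e 0) + Finsupp.single 1 (e 1) := by
    intro e; ext i; fin_cases i <;> simp [Finsupp.single_apply]
  have hwd : ∀ e : Fin 2 →₀ ℕ, Finsupp.weight w e = e 0 * p₂ + e 1 * p₁ := by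
    intro e
    conv_lhs => rw [hdecomp e]
    rw [map_add, wsingle, wsingle]
    simp [hw]
  have hw0 : Finsupp.weight w (Finsupp.single (0 : Fin 2) p₁) = p := by
    rw [wsingle]; simp [hw, hp]
  have hw1 : Finsupp.weight w (Finsupp.single (1 : Fin 2) p₂) = p := by
    rw [wsingle]; simp [hw, hp, mul_comm]
  have hd01 : (Finsupp.single (0 : Fin 2) p₁) ≠ Finsupp.single (1 : Fin 2) p₂ := by
    intro h
    have := DFunLike.congr_fun h 0
    simp [Finsupp.single_apply] at this
    omega
  set F : MvPowerSeries (Fin 2) ℂ :=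
    C (σ := Fin 2) (R := ℂ) u₁ * (X 0) ^ p₁ + C (σ := Fin 2) (R := ℂ) u₂ * (X 1) ^ p₂ with hF
  -- coefficients of RHS
  have coeffRHS : ∀ d : Fin 2 →₀ ℕ, coeff d (C (σ := Fin 2) (R := ℂ) lam * F) =
      lam * (u₁ * (if d = Finsupp.single 0 p₁ then 1 else 0)
        + u₂ * (if d = Finsupp.single 1 p₂ then 1 else 0)) := by
    intro d
    rw [hF, coeff_C_mul, map_add, coeff_C_mul, coeff_C_mul, coeff_X_pow, coeff_X_pow]
  have coeffRHS0 : coeff (Finsupp.single (0:Fin 2) p₁) (C (σ := Fin 2) (R := ℂ) lam * F) = lam * u₁ := by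
    rw [coeffRHS, if_pos rfl, if_neg hd01]; ring
  have homRHS : ∀ d, coeff d (C (σ := Fin 2) (R := ℂ) lam * F) ≠ 0 → Finsupp.weight w d = p := by
    intro d hd
    rw [coeffRHS] at hd
    by_cases h0 : d = Finsupp.single 0 p₁
    · rw [h0]; exact hw0
    by_cases h1 : d = Finsupp.single 1 p₂
    · rw [h1]; exact hw1
    simp [h0, h1] at hd
  -- g ≠ 0
  have hgne : g ≠ 0 := by
    intro h
    rw [h, zero_pow (by omega : q ≠ 0), mul_zero] at heq
    have := congrArg (coeff (Finsupp.single (0:Fin 2) p₁)) heq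
    rw [map_zero, coeffRHS0] at this
    exact mul_ne_zero hlam hu₁ this.symm
  -- the weighted order m of g
  have hfin := (ne_zero_iff_weightedOrder_finite w).mp hgne
  set m : ℕ := (g.weightedOrder w).toNat with hm
  have hordg : g.weightedOrder w = (m : ℕ∞) := hfin.symm
  obtain ⟨⟨d₀, hd₀ne, hd₀w⟩, hlow⟩ := (weightedOrder_eq_nat w).mp hordg
  have hm1 : 1 ≤ m := by
    by_contra h
    have hm0 : m = 0 := by omega
    rw [hm0] at hd₀w
    have he0 : d₀ = 0 := by
      have := hwd d₀
      rw [hd₀w] at this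
      have h0 : d₀ 0 = 0 ∧ d₀ 1 = 0 := by constructor <;> nlinarith
      rw [hdecomp d₀, h0.1, h0.2]; simp
    rw [he0, coeff_zero_eq_constantCoeff, hg0] at hd₀ne
    exact hd₀ne rfl
  -- the leading form G
  set G : MvPowerSeries (Fin 2) ℂ := weightedHomogeneousComponent w m g with hG
  have coeffG : ∀ d, coeff d G = if Finsupp.weight w d = m then coeff d g else 0 :=
    fun d => coeff_weightedHomogeneousComponent w m d g
  have homG : ∀ d, coeff d G ≠ 0 → Finsupp.weight w d = m := by
    intro d hd
    by_contra h
    rw [coeffG, if_neg h] at hd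
    exact hd rfl
  have hGne : G ≠ 0 := by
    intro h
    have := coeffG d₀
    rw [h, map_zero, if_pos hd₀w] at this
    exact hd₀ne this.symm
  have hOG : (m : ℕ∞) ≤ G.weightedOrder w := by
    apply nat_le_weightedOrder
    intro d hd
    rw [coeffG, if_neg (by omega)]
  -- the remainder r
  set r : MvPowerSeries (Fin 2) ℂ := g - G with hrdef
  have hOr : ((m + 1 : ℕ) : ℕ∞) ≤ r.weightedOrder w := by
    apply nat_le_weightedOrder
    intro d hd
    rw [hrdef, map_sub, coeffG]
    rcases Nat.lt_or_ge (Finsupp.weight w d) m with h | h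
    · rw [if_neg (by omega), hlow d h, sub_zero]
    · have : Finsupp.weight w d = m := by omega
      rw [if_pos this, sub_self]
  have hgGr : g = G + r := by rw [hrdef]; ring
  -- E₁ = g^q - G^q has order ≥ q*m+1
  have hE₁ : ((q * m + 1 : ℕ) : ℕ∞) ≤ (g ^ q - G ^ q).weightedOrder w := by
    rw [hgGr]
    exact pow_diff_order w hOG hOr q
  -- B
  set B : MvPowerSeries (Fin 2) ℂ := C (σ := Fin 2) (R := ℂ) b₁ * (X 0) ^ p₁ + C (σ := Fin 2) (R := ℂ) b₂ * (X 1) ^ p₂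
    with hB
  have hOB : (p : ℕ∞) ≤ B.weightedOrder w := by
    apply nat_le_weightedOrder
    intro d hd
    rw [hB, map_add, coeff_C_mul, coeff_C_mul, coeff_X_pow, coeff_X_pow]
    by_cases h0 : d = Finsupp.single 0 p₁
    · rw [h0, hw0] at hd; omega
    by_cases h1 : d = Finsupp.single 1 p₂
    · rw [h1, hw1] at hd; omega
    simp [h0, h1]
  have hOgq : ((q * m : ℕ) : ℕ∞) ≤ (g ^ q).weightedOrder w := by
    apply pow_order' w (le_of_eq hordg.symm)
  have hOBgq : ((p + q * m : ℕ) : ℕ∞) ≤ (B * g ^ q).weightedOrder w := by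
    refine le_trans ?_ (le_weightedOrder_mul w)
    rw [Nat.cast_add]
    exact add_le_add hOB hOgq
  -- rewrite the equation
  have heq2 : ∀ d : Fin 2 →₀ ℕ, coeff d (G ^ q) + coeff d (g ^ q - G ^ q)
      - coeff d (B * g ^ q) = coeff d (C (σ := Fin 2) (R := ℂ) lam * F) := by
    intro d
    have hlhs : (1 - C (σ := Fin 2) (R := ℂ) b₁ * (X 0) ^ p₁ - C (σ := Fin 2) (R := ℂ) b₂ * (X 1) ^ p₂) * g ^ q
        = G ^ q + (g ^ q - G ^ q) - B * g ^ q := by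
      rw [hB]; ring
    rw [hlhs] at heq
    rw [← map_add, ← map_sub, heq]
  -- q * m = p
  have hqm : q * m = p := by
    rcases lt_trichotomy (q * m) p with h | h | h
    · -- qm < p : leading form of LHS would have to vanish
      have hGqne : G ^ q ≠ 0 := pow_ne_zero q hGne
      have : ∃ d, coeff d (G ^ q) ≠ 0 := by
        by_contra hc
        push_neg at hc
        exact hGqne (MvPowerSeries.ext fun d => by rw [hc d, map_zero])
      obtain ⟨d, hd⟩ := this
      have hwdq : Finsupp.weight w d = q * m := hom_pow w homG q d hd
      have h1 : coeff d (g ^ q - G ^ q) = 0 := by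
        apply coeff_eq_zero_of_lt_weightedOrder w
        refine lt_of_lt_of_le ?_ hE₁
        rw [hwdq]; exact_mod_cast Nat.lt_succ_self _
      have h2 : coeff d (B * g ^ q) = 0 := by
        apply coeff_eq_zero_of_lt_weightedOrder w
        refine lt_of_lt_of_le ?_ hOBgq
        rw [hwdq]; exact_mod_cast (by omega)
      have h3 : coeff d (C (σ := Fin 2) (R := ℂ) lam * F) = 0 := by
        by_contra hc
        have := homRHS d hc
        omega
      have := heq2 d
      rw [h1, h2, h3] at this
      simp at this
      exact absurd this hd
    · exact h
    · -- qm > p : coefficient of RHS at weight p would vanish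
      set d := Finsupp.single (0 : Fin 2) p₁ with hd
      have h0 : coeff d (G ^ q) = 0 := by
        by_contra hc
        have := hom_pow w homG q d hc
        rw [hw0] at this
        omega
      have h1 : coeff d (g ^ q - G ^ q) = 0 := by
        apply coeff_eq_zero_of_lt_weightedOrder w
        refine lt_of_lt_of_le ?_ hE₁
        rw [hw0]; exact_mod_cast (by omega)
      have h2 : coeff d (B * g ^ q) = 0 := by
        apply coeff_eq_zero_of_lt_weightedOrder w
        refine lt_of_lt_of_le ?_ hOBgq
        rw [hw0]; exact_mod_cast (by omega)
      have := heq2 d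
      rw [h0, h1, h2, coeffRHS0] at this
      simp at this
      rcases this with h' | h'
      · exact absurd h' hlam
      · exact absurd h' hu₁
  -- the key identity
  have hKey : G ^ q = C (σ := Fin 2) (R := ℂ) lam * F := by
    ext d
    rcases eq_or_ne (Finsupp.weight w d) p with hwdp | hwdp
    · have h1 : coeff d (g ^ q - G ^ q) = 0 := by
        apply coeff_eq_zero_of_lt_weightedOrder w
        refine lt_of_lt_of_le ?_ hE₁
        rw [hwdp]; exact_mod_cast (show p < q*m+1 by omega)
      have h2 : coeff d (B * g ^ q) = 0 := by
        apply coeff_eq_zero_of_lt_weightedOrder w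
        refine lt_of_lt_of_le ?_ hOBgq
        rw [hwdp]; exact_mod_cast (show p < p + q*m by omega)
      have := heq2 d
      rw [h1, h2] at this
      simpa using this
    · have h0 : coeff d (G ^ q) = 0 := by
        by_contra hc
        have := hom_pow w homG q d hc
        omega
      have h3 : coeff d (C (σ := Fin 2) (R := ℂ) lam * F) = 0 := by
        by_contra hc
        exact hwdp (homRHS d hc)
      rw [h0, h3]
  -- transfer to polynomials
  set S₀ : Finset (Fin 2 →₀ ℕ) :=
    (Finset.range (m+1) ×ˢ Finset.range (m+1)).image
      (fun ij => Finsupp.single 0 ij.1 + Finsupp.single 1 ij.2) with hS₀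
  set P : MvPolynomial (Fin 2) ℂ := ∑ d ∈ S₀, MvPolynomial.monomial d (coeff d G) with hP
  have hPG : (↑P : MvPowerSeries (Fin 2) ℂ) = G := by
    ext e
    rw [MvPolynomial.coeff_coe, hP, MvPolynomial.coeff_sum]
    simp only [MvPolynomial.coeff_monomial]
    rw [Finset.sum_ite_eq' S₀ e (fun d => coeff d G)]
    by_cases he : e ∈ S₀
    · rw [if_pos he]
    · rw [if_neg he]
      by_contra hc
      have hce : coeff e G ≠ 0 := fun h => hc (h.symm)
      have hwe := homG e hce
      rw [hwd e] at hwe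
      have he0 : e 0 ≤ m := by nlinarith
      have he1 : e 1 ≤ m := by nlinarith
      apply he
      rw [hS₀]
      refine Finset.mem_image.mpr ⟨(e 0, e 1), ?_, (hdecomp e).symm⟩
      exact Finset.mem_product.mpr ⟨Finset.mem_range.mpr (by omega),
        Finset.mem_range.mpr (by omega)⟩
  set A' : MvPolynomial (Fin 2) ℂ :=
    MvPolynomial.C (lam*u₁) * MvPolynomial.X 0 ^ p₁
      + MvPolynomial.C (lam*u₂) * MvPolynomial.X 1 ^ p₂ with hA'
  have hA'coe : (↑A' : MvPowerSeries (Fin 2) ℂ) = C (σ := Fin 2) (R := ℂ) lam * F := by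
    rw [hA', MvPolynomial.coe_add, MvPolynomial.coe_mul, MvPolynomial.coe_mul,
      MvPolynomial.coe_pow, MvPolynomial.coe_pow, MvPolynomial.coe_C, MvPolynomial.coe_C,
      MvPolynomial.coe_X, MvPolynomial.coe_X, hF, map_mul, map_mul]
    ring
  have hPq : P ^ q = A' := by
    apply MvPolynomial.coe_inj.mp
    rw [MvPolynomial.coe_pow, hPG, hKey, hA'coe]
  -- substitute X 1 := 1
  set φ : MvPolynomial (Fin 2) ℂ →ₐ[ℂ] Polynomial ℂ :=
    MvPolynomial.aeval (fun i : Fin 2 => if i = 0 then Polynomial.X else 1) with hφ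
  set Q : Polynomial ℂ := φ P with hQdef
  have hQ : Q ^ q = Polynomial.C (lam*u₁) * Polynomial.X ^ p₁ + Polynomial.C (lam*u₂) := by
    have h2 := congrArg φ hPq
    rw [map_pow] at h2
    rw [hQdef, h2, hA', hφ]
    simp [map_add, map_mul, map_pow, MvPolynomial.aeval_X, MvPolynomial.aeval_C,
      Polynomial.algebraMap_eq]
  -- Q is not constant
  have hQdeg : Q.natDegree ≠ 0 := by
    intro h
    have hc := Polynomial.eq_C_of_natDegree_eq_zero h
    rw [hc, ← Polynomial.C_pow] at hQ
    have h2 := congrArg (fun pp => Polynomial.coeff pp p₁) hQ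
    rw [Polynomial.coeff_C, if_neg (show ¬ p₁ = 0 by omega), Polynomial.coeff_add,
      Polynomial.coeff_C_mul, Polynomial.coeff_X_pow, if_pos rfl, mul_one,
      Polynomial.coeff_C, if_neg (show ¬ p₁ = 0 by omega), add_zero] at h2
    exact mul_ne_zero hlam hu₁ h2.symm
  obtain ⟨α, hα⟩ := Complex.exists_root ((Polynomial.natDegree_pos_iff_degree_pos (p := Q)).mp (by omega))
  have hαQ : Polynomial.eval α Q = 0 := hα
  -- α is a root of the right-hand side
  have hRα : lam * u₁ * α ^ p₁ + lam * u₂ = 0 := by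
    have h2 := congrArg (Polynomial.eval α) hQ
    rw [Polynomial.eval_pow, hαQ, zero_pow (show q ≠ 0 by omega)] at h2
    simpa using h2.symm
  -- α is a root of the derivative of the right-hand side
  have hR'α : lam * u₁ * ((p₁ : ℂ) * α ^ (p₁ - 1)) = 0 := by
    have h2 := congrArg (fun pp => Polynomial.eval α (Polynomial.derivative pp)) hQ
    rw [Polynomial.derivative_pow] at h2
    rw [Polynomial.eval_mul, Polynomial.eval_mul, Polynomial.eval_pow, hαQ,
      zero_pow (show q - 1 ≠ 0 by omega), mul_zero, zero_mul] at h2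
    rw [Polynomial.derivative_add, Polynomial.derivative_C, Polynomial.derivative_C_mul,
      Polynomial.derivative_X_pow] at h2
    simpa using h2.symm
  -- hence α ^ (p₁ - 1) = 0, so α ^ p₁ = 0
  have hα0 : α ^ (p₁ - 1) = 0 := by
    rcases mul_eq_zero.mp hR'α with h' | h'
    · exact absurd h' (mul_ne_zero hlam hu₁)
    rcases mul_eq_zero.mp h' with h'' | h''
    · exact absurd h'' (Nat.cast_ne_zero.mpr (by omega))
    · exact h''
  have hαp : α ^ p₁ = 0 := by
    have hsp : p₁ = (p₁ - 1) + 1 := by omega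
    rw [hsp, pow_succ, hα0, zero_mul]
  rw [hαp, mul_zero, zero_add] at hRα
  exact mul_ne_zero hlam hu₂ hRα
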